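/- Let A be a unital C*-algebra, ψ a positive continuous linear functional on A, and a a positive element of A. If |ψ(x a)| ≤ ‖x‖·ψ(a) for every x ∈ A, then the continuous linear functional x ↦ ψ(x a) is positive, and consequently ψ(x a) = ψ(a x) for every selfadjoint x ∈ A. -/

import Mathlib

open scoped ComplexOrder

/-- If a positive functional `ψ` and a positive element `a` of a unital C*-algebra satisfy
`|ψ(xa)| ≤ ‖x‖·ψ(a)` for every `x`, then the functional `x ↦ ψ(xa)` is positive, and
consequently `ψ(xa) = ψ(ax)` for every selfadjoint `x`. -/
theorem positivity_and_commutation_of_norm_attained {A : Type*} [CStarAlgebra A]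
    (ψ : A →L[ℂ] ℂ) (hψ : ∀ x : A, 0 ≤ ψ (star x * x))
    (a : A) (hapos : ∃ b : A, a = star b * b)
    (h : ∀ x : A, (‖ψ (x * a)‖ : ℂ) ≤ (‖x‖ : ℂ) * ψ a) :
    (∀ x : A, 0 ≤ ψ ((star x * x) * a)) ∧
    (∀ x : A, IsSelfAdjoint x → ψ (x * a) = ψ (a * x)) := by
  rcases subsingleton_or_nontrivial A with hA | hA
  · constructor
    · intro x
      rw [Subsingleton.elim (star x * x * a) (0 : A), map_zero]
    · intro x _
      rw [Subsingleton.elim (x * a) (a * x)]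
  letI := CStarAlgebra.spectralOrder A
  haveI := CStarAlgebra.spectralOrderedRing A
  obtain ⟨b, hb⟩ := hapos
  have ha_sa : IsSelfAdjoint a := hb ▸ IsSelfAdjoint.star_mul_self b
  have hψa : 0 ≤ ψ a := hb ▸ hψ b
  have him : (ψ a).im = 0 := ((Complex.le_def.mp hψa).2).symm
  set c : ℝ := (ψ a).re with hc_def
  have hcnn : 0 ≤ c := (Complex.le_def.mp hψa).1
  have ψa_eq : ψ a = (c : ℂ) := by
    apply Complex.ext <;> simp [him, hc_def]
  -- real form of the hypothesis
  have key : ∀ x : A, ‖ψ (x * a)‖ ≤ ‖x‖ * c := by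
    intro x
    have := h x
    rw [ψa_eq] at this
    have h2 := (Complex.le_def.mp this).1
    simpa [← Complex.ofReal_mul] using h2
  -- ψ nonneg on nonnegative elements
  have hψnn : ∀ p : A, 0 ≤ p → 0 ≤ ψ p := by
    intro p hp
    have hs : (0 : A) ≤ CFC.sqrt p := CFC.sqrt_nonneg p
    have h1 : p = star (CFC.sqrt p) * CFC.sqrt p := by
      rw [hs.isSelfAdjoint.star_eq, ← pow_two, CFC.sq_sqrt p hp]
    rw [h1]
    exact hψ _
  -- ψ real on selfadjoint elements
  have hψreal : ∀ s : A, IsSelfAdjoint s → (ψ s).im = 0 := by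
    intro s hs
    have h1 := (Complex.le_def.mp (hψnn _ (CFC.posPart_nonneg s))).2
    have h2 := (Complex.le_def.mp (hψnn _ (CFC.negPart_nonneg s))).2
    rw [← CFC.posPart_sub_negPart s hs, map_sub, Complex.sub_im, ← h1, ← h2]
    simp
  -- ψ is hermitian
  have hherm : ∀ z : A, ψ (star z) = (starRingEnd ℂ) (ψ z) := by
    intro z
    have hz := realPart_add_I_smul_imaginaryPart z
    have hre : (ψ (realPart z : A)).im = 0 := hψreal _ (realPart z).2
    have him' : (ψ (imaginaryPart z : A)).im = 0 := hψreal _ (imaginaryPart z).2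
    conv_lhs => rw [← hz]
    conv_rhs => rw [← hz]
    rw [star_add, star_smul, map_add, map_add, map_smul, map_smul,
      (realPart z).2.star_eq, (imaginaryPart z).2.star_eq]
    apply Complex.ext <;>
      simp [hre, him', Complex.add_im, Complex.add_re, Complex.mul_re, Complex.mul_im]
  -- x ↦ ψ (x * a) is real on selfadjoint elements
  have hreal : ∀ s : A, IsSelfAdjoint s → (ψ (s * a)).im = 0 := by
    intro s hs
    rcases eq_or_lt_of_le hcnn with hc | hc
    · have h0 : ‖ψ (s * a)‖ ≤ 0 := by simpa [← hc] using key s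
      have hz : ψ (s * a) = 0 :=
        norm_eq_zero.mp (le_antisymm h0 (norm_nonneg _))
      simp [hz]
    · set α : ℝ := (ψ (s * a)).re with hα
      set β : ℝ := (ψ (s * a)).im with hβ
      have hbound : ∀ t : ℝ, α ^ 2 + (β + t * c) ^ 2 ≤ (‖s‖ ^ 2 + t ^ 2) * c ^ 2 := by
        intro t
        set w : A := (t * Complex.I) • (1 : A) with hw
        have expand : ψ ((s + w) * a) = ψ (s * a) + (t * Complex.I) * (c : ℂ) := by
          rw [hw, add_mul, smul_mul_assoc, one_mul, map_add, map_smul, ψa_eq, smul_eq_mul]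
        have hsw : star w = -w := by
          rw [hw, star_smul, star_one, Complex.star_def,
            show (starRingEnd ℂ) (↑t * Complex.I) = -(↑t * Complex.I) by
              simp [Complex.conj_ofReal], neg_smul]
        have hws : w * s = s * w := by
          rw [hw, smul_mul_assoc, one_mul, mul_smul_comm, mul_one]
        have hww : w * w = -((t ^ 2 : ℝ) • (1 : A)) := by
          rw [hw, smul_mul_assoc, one_mul, smul_smul,
            show (↑t * Complex.I) * (↑t * Complex.I) = -(((t ^ 2 : ℝ) : ℂ)) by
              push_cast; rw [mul_mul_mul_comm, Complex.I_mul_I]; ring,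
            neg_smul, Complex.coe_smul]
        have hstar : star (s + w) * (s + w) = s * s + (t ^ 2 : ℝ) • (1 : A) := by
          rw [star_add, hsw, hs.star_eq, add_mul, mul_add, mul_add, neg_mul, neg_mul, hws, hww]
          abel
        have hnormsq : ‖s + w‖ ^ 2 ≤ ‖s‖ ^ 2 + t ^ 2 := by
          rw [sq, ← CStarRing.norm_star_mul_self, hstar]
          calc ‖s * s + (t ^ 2 : ℝ) • (1 : A)‖
              ≤ ‖s * s‖ + ‖(t ^ 2 : ℝ) • (1 : A)‖ := norm_add_le _ _
            _ ≤ ‖s‖ ^ 2 + t ^ 2 := by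
                have h3 : ‖s * s‖ = ‖s‖ ^ 2 := by
                  nth_rewrite 1 [← hs.star_eq]
                  rw [CStarRing.norm_star_mul_self, ← pow_two]
                rw [h3, norm_smul, norm_one, mul_one]
                simp [abs_of_nonneg (sq_nonneg t)]
        have hk := key (s + w)
        have habs2 : ‖ψ ((s + w) * a)‖ ^ 2 ≤ ‖s + w‖ ^ 2 * c ^ 2 := by
          have h4 := mul_self_le_mul_self (norm_nonneg _) hk
          calc ‖ψ ((s + w) * a)‖ ^ 2
              = ‖ψ ((s + w) * a)‖ * ‖ψ ((s + w) * a)‖ := sq _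
            _ ≤ (‖s + w‖ * c) * (‖s + w‖ * c) := h4
            _ = ‖s + w‖ ^ 2 * c ^ 2 := by ring
        rw [expand] at habs2
        have hre : (ψ (s * a) + (↑t * Complex.I) * (c : ℂ)).re = α := by
          simp [hα]
        have him2 : (ψ (s * a) + (↑t * Complex.I) * (c : ℂ)).im = β + t * c := by
          simp [hβ]
        rw [Complex.sq_norm, Complex.normSq_apply, hre, him2] at habs2
        calc α ^ 2 + (β + t * c) ^ 2 = α * α + (β + t * c) * (β + t * c) := by ring
          _ ≤ ‖s + w‖ ^ 2 * c ^ 2 := habs2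
          _ ≤ (‖s‖ ^ 2 + t ^ 2) * c ^ 2 :=
              mul_le_mul_of_nonneg_right hnormsq (sq_nonneg c)
      by_contra hβ0
      have hd : β * c ≠ 0 := mul_ne_zero hβ0 (ne_of_gt hc)
      set t : ℝ := (‖s‖ ^ 2 * c ^ 2 + 1) / (2 * (β * c)) with ht
      have h2td : 2 * t * (β * c) = ‖s‖ ^ 2 * c ^ 2 + 1 := by
        rw [ht]; field_simp
      have h5 := hbound t
      nlinarith [sq_nonneg α, sq_nonneg β, sq_nonneg (t * c)]
  constructor
  · intro x
    set p : A := star x * x with hp_def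
    have hp : 0 ≤ p := star_mul_self_nonneg x
    have hpsa : IsSelfAdjoint p := hp.isSelfAdjoint
    set r : ℝ := ‖p‖ with hr_def
    have hr : 0 ≤ r := norm_nonneg p
    have hle : p ≤ algebraMap ℝ A r := hpsa.le_algebraMap_norm_self
    set q : A := algebraMap ℝ A r - p with hq_def
    have hq0 : 0 ≤ q := sub_nonneg.mpr hle
    have hqn : ‖q‖ ≤ r := by
      rw [CStarAlgebra.norm_le_iff_le_algebraMap q hr hq0, hq_def]
      simpa using hp
    have halg : (algebraMap ℝ A r) * a = (r : ℂ) • a := by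
      rw [Algebra.algebraMap_eq_smul_one, smul_mul_assoc, one_mul, Complex.coe_smul]
    have hψq : ψ (q * a) = (r : ℂ) * (c : ℂ) - ψ (p * a) := by
      rw [hq_def, sub_mul, map_sub, halg, map_smul, ψa_eq, smul_eq_mul]
    have himp : (ψ (p * a)).im = 0 := hreal p hpsa
    set αp : ℝ := (ψ (p * a)).re with hαp
    have hqa_real : ψ (q * a) = ((r * c - αp : ℝ) : ℂ) := by
      rw [hψq]
      apply Complex.ext <;> simp [himp, hαp]
    have hkq := key q
    rw [hqa_real, Complex.norm_real, Real.norm_eq_abs] at hkq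
    have h1 : |r * c - αp| ≤ r * c := hkq.trans (mul_le_mul_of_nonneg_right hqn hcnn)
    have h2 : 0 ≤ αp := by
      have := (abs_le.mp h1).2
      linarith
    rw [Complex.le_def]
    exact ⟨by simpa [hαp] using h2, by simp [himp]⟩
  · intro x hx
    have hstar : star (x * a) = a * x := by
      rw [star_mul, hx.star_eq, ha_sa.star_eq]
    rw [← hstar, hherm, eq_comm, Complex.conj_eq_iff_im]
    exact hreal x hx
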